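/- Let K be a finite connected simple graph with V vertices and E edges, and let K □ K be the Cartesian (box) product of K with itself. Let s be the automorphism of K □ K swapping the two coordinates, i.e., s(x,y) = (y,x). Then the number of s-symmetric 1-cycles in K □ K equals 2^{VE - V(V-1)/2}. -/

import Mathlib

set_option linter.unusedSectionVars false
set_option linter.unusedTactic false
set_option linter.unreachableTactic false
set_option linter.unnecessarySeqFocus false
open Finset


/-- A 1-cycle in a simple graph `G` is a set `C` of edges of `G` such that every
vertex is incident to an even number of edges of `C`. -/
def IsOneCycle {V : Type*} [DecidableEq V] (G : SimpleGraph V) (C : Finset (Sym2 V)) : Prop :=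
  (∀ e ∈ C, e ∈ G.edgeSet) ∧ ∀ v : V, Even (C.filter (fun e => v ∈ e)).card

namespace SymCycleAux

variable {V : Type*} [DecidableEq V]

def hE (a : V) (e : Sym2 V) : Sym2 (V × V) := Sym2.map (fun b => (a, b)) e
def vE (a : V) (e : Sym2 V) : Sym2 (V × V) := Sym2.map (fun b => (b, a)) e

lemma mem_hE {x y a : V} {e : Sym2 V} : (x, y) ∈ hE a e ↔ a = x ∧ y ∈ e := by
  simp only [hE, Sym2.mem_map, Prod.mk.injEq]
  constructor
  · rintro ⟨b, hb, rfl, rfl⟩; exact ⟨rfl, hb⟩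
  · rintro ⟨rfl, hy⟩; exact ⟨y, hy, rfl, rfl⟩

lemma mem_vE {x y a : V} {e : Sym2 V} : (x, y) ∈ vE a e ↔ a = y ∧ x ∈ e := by
  simp only [vE, Sym2.mem_map, Prod.mk.injEq]
  constructor
  · rintro ⟨b, hb, rfl, rfl⟩; exact ⟨rfl, hb⟩
  · rintro ⟨rfl, hy⟩; exact ⟨x, hy, rfl, rfl⟩

lemma swap_hE (a : V) (e : Sym2 V) : Sym2.map Prod.swap (hE a e) = vE a e := by
  simp [hE, vE, Sym2.map_map, Function.comp_def]

lemma swap_vE (a : V) (e : Sym2 V) : Sym2.map Prod.swap (vE a e) = hE a e := by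
  simp [hE, vE, Sym2.map_map, Function.comp_def]

lemma hE_ne_vE {a a' : V} {e e' : Sym2 V} (he : ¬ e.IsDiag) :
    hE a e ≠ vE a' e' := by
  induction e using Sym2.ind with | _ b c =>
  induction e' using Sym2.ind with | _ b' c' =>
  have hbc : b ≠ c := by simpa using he
  intro h
  simp only [hE, vE, Sym2.map_pair_eq, Sym2.eq_iff, Prod.mk.injEq] at h
  rcases h with ⟨⟨_, h1⟩, ⟨_, h2⟩⟩ | ⟨⟨_, h1⟩, ⟨_, h2⟩⟩ <;> exact hbc (h1.trans h2.symm)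

lemma hE_inj {a a' : V} {e e' : Sym2 V} (h : hE a e = hE a' e') : a = a' ∧ e = e' := by
  induction e using Sym2.ind with | _ b c =>
  induction e' using Sym2.ind with | _ b' c' =>
  simp only [hE, Sym2.map_pair_eq, Sym2.eq_iff, Prod.mk.injEq] at h
  rcases h with ⟨⟨ha, h1⟩, ⟨_, h2⟩⟩ | ⟨⟨ha, h1⟩, ⟨_, h2⟩⟩ <;> subst ha h1 h2 <;>
    simp [Sym2.eq_swap]

lemma vE_inj {a a' : V} {e e' : Sym2 V} (h : vE a e = vE a' e') : a = a' ∧ e = e' := by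
  have := congrArg (Sym2.map Prod.swap) h
  rw [swap_vE, swap_vE] at this
  exact hE_inj this

variable (G : SimpleGraph V)

lemma hE_mem_edgeSet {a : V} {e : Sym2 V} (he : e ∈ G.edgeSet) :
    hE a e ∈ (G.boxProd G).edgeSet := by
  induction e using Sym2.ind with | _ b c =>
  rw [SimpleGraph.mem_edgeSet] at he
  simp [hE, Sym2.map_pair_eq, SimpleGraph.mem_edgeSet, SimpleGraph.boxProd_adj, he]

lemma vE_mem_edgeSet {a : V} {e : Sym2 V} (he : e ∈ G.edgeSet) :
    vE a e ∈ (G.boxProd G).edgeSet := by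
  induction e using Sym2.ind with | _ b c =>
  rw [SimpleGraph.mem_edgeSet] at he
  simp [vE, Sym2.map_pair_eq, SimpleGraph.mem_edgeSet, SimpleGraph.boxProd_adj, he]

lemma edge_classify {d : Sym2 (V × V)} (hd : d ∈ (G.boxProd G).edgeSet) :
    ∃ a e, e ∈ G.edgeSet ∧ (d = hE a e ∨ d = vE a e) := by
  induction d using Sym2.ind with | _ z w =>
  obtain ⟨x1, y1⟩ := z; obtain ⟨x2, y2⟩ := w
  rw [SimpleGraph.mem_edgeSet, SimpleGraph.boxProd_adj] at hd
  rcases hd with ⟨hadj, heq⟩ | ⟨hadj, heq⟩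
  · subst heq
    exact ⟨y1, s(x1, x2), hadj, Or.inr (by simp [vE, Sym2.map_pair_eq])⟩
  · subst heq
    exact ⟨x1, s(y1, y2), hadj, Or.inl (by simp [hE, Sym2.map_pair_eq])⟩

variable [Fintype V] [DecidableRel G.Adj]

def gfun (f : V × G.edgeSet → ZMod 2) (x b : V) : ZMod 2 :=
  ∑ e : G.edgeSet, if b ∈ (e : Sym2 V) then f (x, e) else 0

def coef (p : Sym2 V) (z : V × V) (e : Sym2 V) : ZMod 2 :=
  if Sym2.mk z.1 z.2 = p ∧ z.2 ∈ e then 1 else 0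

def L : (V × G.edgeSet → ZMod 2) →ₗ[ZMod 2] ({p : Sym2 V // ¬ p.IsDiag} → ZMod 2) where
  toFun f := fun p => ∑ z : V × V, ∑ e : G.edgeSet, coef ↑p z ↑e * f (z.1, e)
  map_add' f g := by
    funext p
    simp [mul_add, Finset.sum_add_distrib]
  map_smul' c f := by
    funext p
    simp only [Pi.smul_apply, smul_eq_mul, RingHom.id_apply, Finset.mul_sum]
    refine Finset.sum_congr rfl fun z _ => Finset.sum_congr rfl fun e _ => by ring

lemma L_eval (f : V × G.edgeSet → ZMod 2) {x y : V} (hxy : x ≠ y) (hp : ¬ Sym2.IsDiag s(x, y)) :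
    L G f ⟨s(x, y), hp⟩ = gfun G f x y + gfun G f y x := by
  have key : ∀ z : V × V, (∑ e : G.edgeSet, coef s(x, y) z ↑e * f (z.1, e))
      = if Sym2.mk z.1 z.2 = s(x, y) then gfun G f z.1 z.2 else 0 := by
    intro z
    by_cases h : Sym2.mk z.1 z.2 = s(x, y) <;> simp [coef, gfun, h, ite_mul]
  show (∑ z : V × V, ∑ e : G.edgeSet, coef (↑(⟨s(x,y), hp⟩ : {p : Sym2 V // ¬ p.IsDiag})) z ↑e * f (z.1, e)) = _
  simp only [key]
  rw [← Finset.sum_filter]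
  have hfil : (univ.filter (fun z : V × V => Sym2.mk z.1 z.2 = s(x, y))) = {(x, y), (y, x)} := by
    ext ⟨u, v⟩
    simp only [mem_filter, mem_univ, true_and, Sym2.eq_iff, mem_insert, mem_singleton,
      Prod.ext_iff]
  rw [hfil, Finset.sum_pair (by simp [Prod.ext_iff]; tauto)]

lemma walk_parity {a b : V} (W : G.Walk a b) (v : V) :
    (W.edges.map (fun e => if v ∈ e then (1 : ZMod 2) else 0)).sum
      = (if v = a then 1 else 0) + (if v = b then 1 else 0) := by
  induction W with
  | nil => simpa using (CharTwo.add_self_eq_zero _).symm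
  | @cons u w b h W ih =>
    rw [SimpleGraph.Walk.edges_cons, List.map_cons, List.sum_cons, ih]
    have huw : u ≠ w := h.ne
    by_cases hu : v = u <;> by_cases hw : v = w <;>
      simp [Sym2.mem_iff, hu, hw, huw, huw.symm] <;>
      first
        | rfl
        | (rw [← add_assoc]; simp [CharTwo.add_self_eq_zero])
        | (exact (huw (hu ▸ hw ▸ rfl)).elim)

lemma sum_edgeSet_list (l : List (Sym2 V)) (hl : l.Nodup) (hsub : ∀ e ∈ l, e ∈ G.edgeSet)
    (g : Sym2 V → ZMod 2) :
    (∑ e : G.edgeSet, if ↑e ∈ l then g ↑e else 0) = (l.map g).sum := by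
  rw [← List.sum_toFinset g hl]
  rw [← Finset.sum_subtype G.edgeFinset (fun x => SimpleGraph.mem_edgeFinset)
      (fun e => if e ∈ l then g e else 0)]
  simp_rw [← List.mem_toFinset]
  rw [Finset.sum_ite_mem]
  congr 1
  refine Finset.inter_eq_right.mpr fun e he => ?_
  rw [SimpleGraph.mem_edgeFinset]
  exact hsub e (List.mem_toFinset.mp he)
lemma gfun_pathf {x y : V} (W : G.Walk y x) (hW : W.edges.Nodup) (a b : V) :
    gfun G (fun p => if p.1 = x ∧ ↑p.2 ∈ W.edges then 1 else 0) a b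
      = if a = x then ((if b = y then 1 else 0) + (if b = x then 1 else 0)) else 0 := by
  by_cases ha : a = x
  · have hh : gfun G (fun p => if p.1 = x ∧ ↑p.2 ∈ W.edges then 1 else 0) a b
        = ∑ e : G.edgeSet,
            (if ↑e ∈ W.edges then (if b ∈ (e : Sym2 V) then (1 : ZMod 2) else 0) else 0) := by
      unfold gfun
      refine Finset.sum_congr rfl fun e _ => ?_
      by_cases h1 : b ∈ (e : Sym2 V) <;> by_cases h2 : (e : Sym2 V) ∈ W.edges <;>
        simp [h1, h2, ha]
    rw [hh, sum_edgeSet_list G W.edges hW (fun e he => W.edges_subset_edgeSet he)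
        (fun e => if b ∈ e then (1 : ZMod 2) else 0), walk_parity, if_pos ha]
  · rw [if_neg ha]
    unfold gfun
    refine Finset.sum_eq_zero fun e _ => ?_
    simp [ha]

lemma L_surjective (hconn : G.Connected) : Function.Surjective (L G) := by
  have hsingle : ∀ p : {p : Sym2 V // ¬ p.IsDiag},
      Pi.single p (1 : ZMod 2) ∈ LinearMap.range (L G) := by
    rintro ⟨p, hp⟩
    induction p using Sym2.ind with | _ x y =>
    have hxy : x ≠ y := by simpa using hp
    obtain ⟨W0⟩ := hconn.preconnected y x
    let W := W0.toPath
    refine ⟨fun p => if p.1 = x ∧ ↑p.2 ∈ W.1.edges then 1 else 0, ?_⟩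
    funext q
    obtain ⟨q, hq⟩ := q
    induction q using Sym2.ind with | _ u v =>
    have huv : u ≠ v := by simpa using hq
    rw [L_eval G _ huv hq, gfun_pathf G W.1 W.2.edges_nodup,
      gfun_pathf G W.1 W.2.edges_nodup]
    have hps : (Pi.single (⟨s(x, y), hp⟩ : {p : Sym2 V // ¬ p.IsDiag}) (1 : ZMod 2) :
          {p : Sym2 V // ¬ p.IsDiag} → ZMod 2)
        ⟨s(u, v), hq⟩ = if s(u, v) = s(x, y) then 1 else 0 := by
      rw [Pi.single_apply]
      simp only [Subtype.mk.injEq]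
    rw [hps]
    by_cases hux : u = x <;> by_cases hvx : v = x
    · exact absurd (hux.trans hvx.symm) huv
    · subst hux
      simp [Sym2.eq_iff, hvx, hxy.symm, huv.symm]
    · subst hvx
      simp [Sym2.eq_iff, hux, hxy.symm, huv]
    · simp [Sym2.eq_iff, hux, hvx]
  intro g
  have hg : g = ∑ p, g p • Pi.single p (1 : ZMod 2) := by
    funext q
    rw [Finset.sum_apply]
    simp [Pi.single_apply]
  have : g ∈ LinearMap.range (L G) := by
    rw [hg]
    exact Submodule.sum_mem _ fun p _ => Submodule.smul_mem _ _ (hsingle p)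
  exact this

def Sf (f : V × G.edgeSet → ZMod 2) : Finset (V × G.edgeSet) :=
  univ.filter (fun p => f p = 1)

lemma mem_Sf {f : V × G.edgeSet → ZMod 2} {p} : p ∈ Sf G f ↔ f p = 1 := by simp [Sf]

def Cf (f : V × G.edgeSet → ZMod 2) : Finset (Sym2 (V × V)) :=
  (Sf G f).image (fun p => hE p.1 ↑p.2) ∪ (Sf G f).image (fun p => vE p.1 ↑p.2)

lemma hE_injective : Function.Injective (fun p : V × G.edgeSet => hE p.1 ↑p.2) := by
  rintro ⟨a, e⟩ ⟨a', e'⟩ h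
  obtain ⟨h1, h2⟩ := hE_inj h
  exact Prod.ext h1 (Subtype.ext h2)

lemma vE_injective : Function.Injective (fun p : V × G.edgeSet => vE p.1 ↑p.2) := by
  rintro ⟨a, e⟩ ⟨a', e'⟩ h
  obtain ⟨h1, h2⟩ := vE_inj h
  exact Prod.ext h1 (Subtype.ext h2)

lemma Cf_subset (f : V × G.edgeSet → ZMod 2) :
    ∀ d ∈ Cf G f, d ∈ (G.boxProd G).edgeSet := by
  intro d hd
  rw [Cf, mem_union] at hd
  rcases hd with hd | hd <;> obtain ⟨p, _, rfl⟩ := Finset.mem_image.mp hd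
  · exact hE_mem_edgeSet G p.2.2
  · exact vE_mem_edgeSet G p.2.2

lemma Cf_swap (f : V × G.edgeSet → ZMod 2) :
    (Cf G f).image (Sym2.map Prod.swap) = Cf G f := by
  unfold Cf
  rw [Finset.image_union, Finset.image_image, Finset.image_image]
  have e1 : (Sym2.map Prod.swap ∘ fun p : V × G.edgeSet => hE p.1 ↑p.2)
      = fun p : V × G.edgeSet => vE p.1 ↑p.2 := by
    funext p; simp [swap_hE]
  have e2 : (Sym2.map Prod.swap ∘ fun p : V × G.edgeSet => vE p.1 ↑p.2)
      = fun p : V × G.edgeSet => hE p.1 ↑p.2 := by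
    funext p; simp [swap_vE]
  rw [e1, e2, union_comm]

def fC (C : Finset (Sym2 (V × V))) : V × G.edgeSet → ZMod 2 :=
  fun p => if hE p.1 ↑p.2 ∈ C then 1 else 0

lemma zmod2_cases (x : ZMod 2) : x = 0 ∨ x = 1 := by revert x; decide

lemma hE_mem_Cf {f : V × G.edgeSet → ZMod 2} {a : V} {e : G.edgeSet} :
    hE a ↑e ∈ Cf G f ↔ f (a, e) = 1 := by
  constructor
  · intro h
    rw [Cf, mem_union] at h
    rcases h with h | h <;> obtain ⟨p, hp, hpe⟩ := Finset.mem_image.mp h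
    · obtain ⟨h1, h2⟩ := hE_inj hpe
      have hpa : p = (a, e) := Prod.ext h1 (Subtype.ext h2)
      rw [← hpa]; exact (mem_Sf G).mp hp
    · exact absurd hpe.symm (hE_ne_vE (G.not_isDiag_of_mem_edgeSet e.2))
  · intro h
    exact mem_union_left _ (Finset.mem_image.mpr ⟨(a, e), (mem_Sf G).mpr h, rfl⟩)

lemma vE_mem_Cf {f : V × G.edgeSet → ZMod 2} {a : V} {e : G.edgeSet} :
    vE a ↑e ∈ Cf G f ↔ f (a, e) = 1 := by
  constructor
  · intro h
    rw [Cf, mem_union] at h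
    rcases h with h | h <;> obtain ⟨p, hp, hpe⟩ := Finset.mem_image.mp h
    · exact absurd hpe (hE_ne_vE (G.not_isDiag_of_mem_edgeSet p.2.2))
    · obtain ⟨h1, h2⟩ := vE_inj hpe
      have hpa : p = (a, e) := Prod.ext h1 (Subtype.ext h2)
      rw [← hpa]; exact (mem_Sf G).mp hp
  · intro h
    exact mem_union_right _ (Finset.mem_image.mpr ⟨(a, e), (mem_Sf G).mpr h, rfl⟩)

lemma fC_Cf (f : V × G.edgeSet → ZMod 2) : fC G (Cf G f) = f := by
  funext p
  obtain ⟨a, e⟩ := p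
  show (if hE a ↑e ∈ Cf G f then (1 : ZMod 2) else 0) = f (a, e)
  rcases zmod2_cases (f (a, e)) with h | h
  · have hn : hE a ↑e ∉ Cf G f := fun hc => by
      have h1 := (hE_mem_Cf G).mp hc
      rw [h] at h1
      exact absurd h1 (by decide)
    rw [if_neg hn, h]
  · rw [if_pos ((hE_mem_Cf G).mpr h), h]

lemma swap_swap_sym2 (d : Sym2 (V × V)) :
    Sym2.map Prod.swap (Sym2.map Prod.swap d) = d := by
  rw [Sym2.map_map]
  have : (Prod.swap ∘ Prod.swap : V × V → V × V) = id := by funext p; simp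
  rw [this, Sym2.map_id, id_eq]

lemma mem_of_swap_mem {C : Finset (Sym2 (V × V))} (h2 : C.image (Sym2.map Prod.swap) = C)
    {d} (hd : d ∈ C) : Sym2.map Prod.swap d ∈ C := by
  have := Finset.mem_image_of_mem (Sym2.map Prod.swap) hd
  rwa [h2] at this

lemma Cf_fC {C : Finset (Sym2 (V × V))} (h1 : ∀ d ∈ C, d ∈ (G.boxProd G).edgeSet)
    (h2 : C.image (Sym2.map Prod.swap) = C) : Cf G (fC G C) = C := by
  ext d
  constructor
  · intro hd
    rw [Cf, mem_union] at hd
    rcases hd with hd | hd <;> obtain ⟨p, hp, rfl⟩ := Finset.mem_image.mp hd <;>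
      have hp1 : hE p.1 ↑p.2 ∈ C := by
        have := (mem_Sf G).mp hp
        by_contra hc
        simp only [fC, if_neg hc] at this
        exact absurd this (by decide)
    · exact hp1
    · rw [← swap_hE]
      exact mem_of_swap_mem h2 hp1
  · intro hd
    obtain ⟨a, e, he, hcase⟩ := edge_classify G (h1 d hd)
    rcases hcase with rfl | rfl
    · refine mem_union_left _ (Finset.mem_image.mpr ⟨(a, ⟨e, he⟩), ?_, rfl⟩)
      rw [mem_Sf G]
      exact if_pos hd
    · refine mem_union_right _ (Finset.mem_image.mpr ⟨(a, ⟨e, he⟩), ?_, rfl⟩)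
      rw [mem_Sf G]
      refine if_pos ?_
      have := mem_of_swap_mem h2 hd
      rwa [swap_vE] at this

lemma even_iff_cast_zmod2 (n : ℕ) : Even n ↔ ((n : ZMod 2) = 0) := by
  rw [ZMod.natCast_eq_zero_iff]
  exact ⟨fun h => h.two_dvd, fun h => (even_iff_two_dvd).mpr h⟩

lemma card_filter_Sf_cast (f : V × G.edgeSet → ZMod 2) (x y : V) :
    ((((Sf G f).filter (fun p => p.1 = x ∧ y ∈ (p.2 : Sym2 V))).card : ℕ) : ZMod 2)
      = gfun G f x y := by
  rw [Finset.card_filter]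
  unfold Sf
  rw [Finset.sum_filter]
  push_cast
  have hterm : ∀ p : V × G.edgeSet,
      (if f p = 1 then (if (p.1 = x ∧ y ∈ (p.2 : Sym2 V)) then (1 : ZMod 2) else 0) else 0)
        = (if (p.1 = x ∧ y ∈ (p.2 : Sym2 V)) then f p else 0) := by
    intro p
    rcases zmod2_cases (f p) with h | h <;>
      by_cases hc : (p.1 = x ∧ y ∈ (p.2 : Sym2 V)) <;>
      simp [h, hc]
  rw [Finset.sum_congr rfl (fun p _ => hterm p)]
  rw [Fintype.sum_prod_type]
  simp_rw [ite_and]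
  have hrow : ∀ a : V,
      (∑ e : G.edgeSet, if a = x then (if y ∈ (e : Sym2 V) then f (a, e) else 0) else 0)
        = if a = x then gfun G f x y else 0 := by
    intro a
    by_cases h : a = x <;> simp [h, gfun]
  rw [Finset.sum_congr rfl (fun a _ => hrow a)]
  simp

lemma card_filter_Cf (f : V × G.edgeSet → ZMod 2) (x y : V) :
    ((Cf G f).filter (fun d => (x, y) ∈ d)).card
      = ((Sf G f).filter (fun p => p.1 = x ∧ y ∈ (p.2 : Sym2 V))).card
        + ((Sf G f).filter (fun p => p.1 = y ∧ x ∈ (p.2 : Sym2 V))).card := by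
  unfold Cf
  rw [Finset.filter_union, Finset.card_union_of_disjoint]
  · congr 1
    · rw [Finset.filter_image, Finset.card_image_of_injective _ (hE_injective G)]
      congr 1
      apply Finset.filter_congr
      intro p _
      simpa using (mem_hE (x := x) (y := y) (a := p.1) (e := (p.2 : Sym2 V)))
    · rw [Finset.filter_image, Finset.card_image_of_injective _ (vE_injective G)]
      congr 1
      apply Finset.filter_congr
      intro p _
      simpa using (mem_vE (x := x) (y := y) (a := p.1) (e := (p.2 : Sym2 V)))
  · rw [Finset.disjoint_left]
    intro d hd1 hd2
    rw [Finset.mem_filter] at hd1 hd2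
    obtain ⟨p, _, rfl⟩ := Finset.mem_image.mp hd1.1
    obtain ⟨q, _, hq⟩ := Finset.mem_image.mp hd2.1
    exact hE_ne_vE (G.not_isDiag_of_mem_edgeSet p.2.2) hq.symm

lemma isOneCycle_Cf_iff (f : V × G.edgeSet → ZMod 2) :
    IsOneCycle (G.boxProd G) (Cf G f) ↔ L G f = 0 := by
  constructor
  · rintro ⟨-, hpar⟩
    funext q
    obtain ⟨q, hq⟩ := q
    induction q using Sym2.ind with | _ x y =>
    have hxy : x ≠ y := by simpa using hq
    rw [L_eval G f hxy hq, Pi.zero_apply]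
    have hev := hpar (x, y)
    rw [card_filter_Cf G f x y, even_iff_cast_zmod2] at hev
    push_cast at hev
    rwa [card_filter_Sf_cast, card_filter_Sf_cast] at hev
  · intro hL
    refine ⟨Cf_subset G f, ?_⟩
    rintro ⟨x, y⟩
    rw [card_filter_Cf G f x y]
    by_cases hxy : x = y
    · subst hxy
      exact Even.add_self _
    · have hq : ¬ (Sym2.IsDiag s(x, y)) := by simpa using hxy
      have hz := congrFun hL ⟨s(x, y), hq⟩
      rw [L_eval G f hxy hq, Pi.zero_apply] at hz
      rw [← card_filter_Sf_cast G f x y, ← card_filter_Sf_cast G f y x] at hz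
      rw [even_iff_cast_zmod2]
      push_cast
      exact hz

def theEquiv :
    {C : Finset (Sym2 (V × V)) // IsOneCycle (G.boxProd G) C ∧
        C.image (Sym2.map Prod.swap) = C}
      ≃ {f : V × G.edgeSet → ZMod 2 // L G f = 0} where
  toFun C := ⟨fC G C.1, by
    have h := Cf_fC G C.2.1.1 C.2.2
    exact (isOneCycle_Cf_iff G (fC G C.1)).mp (by rw [h]; exact C.2.1)⟩
  invFun f := ⟨Cf G f.1, (isOneCycle_Cf_iff G f.1).mpr f.2, Cf_swap G f.1⟩
  left_inv C := Subtype.ext (Cf_fC G C.2.1.1 C.2.2)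
  right_inv f := Subtype.ext (fC_Cf G f.1)

end SymCycleAux

/-- For a finite connected simple graph `K` with `V` vertices and `E` edges, the
number of 1-cycles in the box product `K □ K` which are symmetric with respect to the
coordinate-swapping automorphism equals `2 ^ (V*E - V*(V-1)/2)`. -/
theorem card_symmetric_oneCycles_boxProd {V : Type*} [Fintype V] [DecidableEq V]
    (G : SimpleGraph V) [DecidableRel G.Adj] (hconn : G.Connected) :
    Nat.card {C : Finset (Sym2 (V × V)) // IsOneCycle (G.boxProd G) C ∧
        C.image (Sym2.map Prod.swap) = C}
      = 2 ^ (Fintype.card V * G.edgeFinset.card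
          - Fintype.card V * (Fintype.card V - 1) / 2) := by
  classical
  haveI : Fact (Nat.Prime 2) := ⟨Nat.prime_two⟩
  rw [Nat.card_congr (SymCycleAux.theEquiv G)]
  rw [Nat.card_congr (Equiv.subtypeEquivRight
      (fun f : V × G.edgeSet → ZMod 2 =>
        (LinearMap.mem_ker (f := SymCycleAux.L G)).symm))]
  haveI : Fintype ↥(LinearMap.ker (SymCycleAux.L G)) := Fintype.ofFinite _
  rw [Nat.card_eq_fintype_card, Module.card_eq_pow_finrank (K := ZMod 2), ZMod.card]
  congr 1
  have hrn := LinearMap.finrank_range_add_finrank_ker (SymCycleAux.L G)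
  rw [LinearMap.range_eq_top.mpr (SymCycleAux.L_surjective G hconn), finrank_top,
    Module.finrank_fintype_fun_eq_card, Module.finrank_fintype_fun_eq_card,
    Sym2.card_subtype_not_diag, Fintype.card_prod, Nat.choose_two_right] at hrn
  rw [SimpleGraph.edgeFinset_card]
  omega
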